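/- Let c(P) be the minimum over all choices of possessions (R_j ∈ ℛ_j for each j ∈ J(P)) of the cardinality of the union of the sets R_j ∩ P. Then c satisfies the recursion: if J(P) = ∅ then c(P) = 0, and otherwise, for any fixed job j' ∈ J(P), c(P) = min over X ∈ ℛ_{j'} of (|X ∩ P| + c(P ∖ X)). -/

import Mathlib

open Finset
open scoped Classical

/-- `J(P)`: the set of jobs every one of whose possessions meets `P`. -/
noncomputable def Jset {α ι : Type*} [DecidableEq α] [Fintype ι]
    (ℛ : ι → Finset (Finset α)) (P : Finset α) : Finset ι :=
  Finset.univ.filter fun j => ∀ S ∈ ℛ j, (S ∩ P).Nonempty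

/-- `c(P)`: minimum cardinality of `⋃_{j ∈ J(P)} (R_j ∩ P)` over choices `R_j ∈ ℛ j`. -/
noncomputable def cval {α ι : Type*} [DecidableEq α] [DecidableEq ι] [Fintype ι]
    (ℛ : ι → Finset (Finset α)) (P : Finset α) : ℕ :=
  sInf {n | ∃ f : ι → Finset α, (∀ j, f j ∈ ℛ j) ∧
    n = ((Jset ℛ P).biUnion fun j => f j ∩ P).card}

lemma mem_Jset_iff {α ι : Type*} [DecidableEq α] [Fintype ι]
    (ℛ : ι → Finset (Finset α)) (P : Finset α) (j : ι) :
    j ∈ Jset ℛ P ↔ ∀ S ∈ ℛ j, (S ∩ P).Nonempty := by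
  simp [Jset]

lemma cval_set_nonempty {α ι : Type*} [DecidableEq α] [DecidableEq ι] [Fintype ι]
    (ℛ : ι → Finset (Finset α)) (hR : ∀ j, (ℛ j).Nonempty) (P : Finset α) :
    {n | ∃ f : ι → Finset α, (∀ j, f j ∈ ℛ j) ∧
      n = ((Jset ℛ P).biUnion fun j => f j ∩ P).card}.Nonempty :=
  ⟨_, fun j => (hR j).choose, fun j => (hR j).choose_spec, rfl⟩

lemma cval_le {α ι : Type*} [DecidableEq α] [DecidableEq ι] [Fintype ι]
    (ℛ : ι → Finset (Finset α)) (P : Finset α) (f : ι → Finset α)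
    (hf : ∀ j, f j ∈ ℛ j) :
    cval ℛ P ≤ ((Jset ℛ P).biUnion fun j => f j ∩ P).card :=
  Nat.sInf_le ⟨f, hf, rfl⟩

lemma cval_attained {α ι : Type*} [DecidableEq α] [DecidableEq ι] [Fintype ι]
    (ℛ : ι → Finset (Finset α)) (hR : ∀ j, (ℛ j).Nonempty) (P : Finset α) :
    ∃ f : ι → Finset α, (∀ j, f j ∈ ℛ j) ∧
      cval ℛ P = ((Jset ℛ P).biUnion fun j => f j ∩ P).card :=
  Nat.sInf_mem (cval_set_nonempty ℛ hR P)

/-- Lemma 2 (`lem:recurrence`): the recursion for the optimal value `c(P)`: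
if `J(P) = ∅` then `c(P) = 0`, and otherwise, for any job `j' ∈ J(P)`,
`c(P) = min_{X ∈ ℛ j'} (|X ∩ P| + c(P \ X))`. -/
theorem recurrence {α ι : Type*} [DecidableEq α] [DecidableEq ι] [Fintype ι]
    (ℛ : ι → Finset (Finset α)) (hR : ∀ j, (ℛ j).Nonempty) (P : Finset α) :
    (Jset ℛ P = ∅ → cval ℛ P = 0) ∧
    (∀ j' ∈ Jset ℛ P,
      cval ℛ P = sInf {n | ∃ X ∈ ℛ j', n = (X ∩ P).card + cval ℛ (P \ X)}) := by
  constructor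
  · intro h
    have h0 : (0 : ℕ) ∈ {n | ∃ f : ι → Finset α, (∀ j, f j ∈ ℛ j) ∧
        n = ((Jset ℛ P).biUnion fun j => f j ∩ P).card} :=
      ⟨fun j => (hR j).choose, fun j => (hR j).choose_spec, by rw [h]; simp⟩
    exact Nat.le_zero.mp (Nat.sInf_le h0)
  · intro j' hj'
    apply le_antisymm
    · -- cval P ≤ sInf S2 : for each n ∈ S2, cval P ≤ n
      have hne : {n | ∃ X ∈ ℛ j', n = (X ∩ P).card + cval ℛ (P \ X)}.Nonempty :=
        ⟨_, ⟨(hR j').choose, (hR j').choose_spec, rfl⟩⟩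
      apply le_csInf hne
      rintro n ⟨X, hX, rfl⟩
      obtain ⟨f', hf', hc'⟩ := cval_attained ℛ hR (P \ X)
      -- witness for jobs outside J(P\X)
      have hg : ∀ j, j ∉ Jset ℛ (P \ X) → ∃ S ∈ ℛ j, S ∩ (P \ X) = ∅ := by
        intro j hj
        rw [mem_Jset_iff] at hj
        push_neg at hj
        obtain ⟨S, hS, hS2⟩ := hj
        exact ⟨S, hS, hS2⟩
      classical
      set f : ι → Finset α := fun j =>
        if j = j' then X
        else if h : j ∈ Jset ℛ (P \ X) then f' j
        else (hg j h).choose with hfdef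
      have hfmem : ∀ j, f j ∈ ℛ j := by
        intro j
        simp only [hfdef]
        split
        · next h => exact h ▸ hX
        · split
          · exact hf' j
          · next h1 h2 => exact (hg j h2).choose_spec.1
      refine le_trans (cval_le ℛ P f hfmem) ?_
      have hsub : ((Jset ℛ P).biUnion fun j => f j ∩ P) ⊆
          (X ∩ P) ∪ ((Jset ℛ (P \ X)).biUnion fun j => f' j ∩ (P \ X)) := by
        intro a ha
        rw [Finset.mem_biUnion] at ha
        obtain ⟨j, hj, haj⟩ := ha
        rw [Finset.mem_inter] at haj
        rw [Finset.mem_union]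
        by_cases hax : a ∈ X
        · exact Or.inl (Finset.mem_inter.mpr ⟨hax, haj.2⟩)
        · have haPX : a ∈ P \ X := Finset.mem_sdiff.mpr ⟨haj.2, hax⟩
          simp only [hfdef] at haj
          rcases eq_or_ne j j' with h | h
          · simp [h] at haj; exact absurd haj.1 hax
          · by_cases h2 : j ∈ Jset ℛ (P \ X)
            · refine Or.inr (Finset.mem_biUnion.mpr ⟨j, h2, ?_⟩)
              simp only [h, if_neg, dif_pos h2] at haj
              exact Finset.mem_inter.mpr ⟨haj.1, haPX⟩
            · exfalso
              simp only [h, if_neg, dif_neg h2] at haj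
              have := (hg j h2).choose_spec.2
              have : a ∈ (hg j h2).choose ∩ (P \ X) :=
                Finset.mem_inter.mpr ⟨haj.1, haPX⟩
              rw [(hg j h2).choose_spec.2] at this
              exact absurd this (Finset.notMem_empty a)
      calc ((Jset ℛ P).biUnion fun j => f j ∩ P).card
          ≤ ((X ∩ P) ∪ ((Jset ℛ (P \ X)).biUnion fun j => f' j ∩ (P \ X))).card :=
            Finset.card_le_card hsub
        _ ≤ (X ∩ P).card + ((Jset ℛ (P \ X)).biUnion fun j => f' j ∩ (P \ X)).card :=
            Finset.card_union_le _ _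
        _ = (X ∩ P).card + cval ℛ (P \ X) := by rw [hc']
    · -- sInf S2 ≤ cval P
      obtain ⟨f, hf, hc⟩ := cval_attained ℛ hR P
      set X := f j' with hXdef
      have hmem : (X ∩ P).card + cval ℛ (P \ X) ∈
          {n | ∃ X ∈ ℛ j', n = (X ∩ P).card + cval ℛ (P \ X)} := ⟨X, hf j', rfl⟩
      refine le_trans (Nat.sInf_le hmem) ?_
      have h1 : cval ℛ (P \ X) ≤ ((Jset ℛ (P \ X)).biUnion fun j => f j ∩ (P \ X)).card :=
        cval_le ℛ (P \ X) f hf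
      have hJsub : Jset ℛ (P \ X) ⊆ Jset ℛ P := by
        intro j hj
        rw [mem_Jset_iff] at hj ⊢
        intro S hS
        obtain ⟨a, ha⟩ := hj S hS
        rw [Finset.mem_inter, Finset.mem_sdiff] at ha
        exact ⟨a, Finset.mem_inter.mpr ⟨ha.1, ha.2.1⟩⟩
      have hdisj : Disjoint (X ∩ P) ((Jset ℛ (P \ X)).biUnion fun j => f j ∩ (P \ X)) := by
        rw [Finset.disjoint_left]
        intro a ha hb
        rw [Finset.mem_biUnion] at hb
        obtain ⟨j, hj, haj⟩ := hb
        rw [Finset.mem_inter, Finset.mem_sdiff] at haj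
        exact haj.2.2 (Finset.mem_inter.mp ha).1
      have hsub : (X ∩ P) ∪ ((Jset ℛ (P \ X)).biUnion fun j => f j ∩ (P \ X)) ⊆
          (Jset ℛ P).biUnion fun j => f j ∩ P := by
        intro a ha
        rw [Finset.mem_union] at ha
        rcases ha with ha | ha
        · exact Finset.mem_biUnion.mpr ⟨j', hj', ha⟩
        · rw [Finset.mem_biUnion] at ha
          obtain ⟨j, hj, haj⟩ := ha
          rw [Finset.mem_inter, Finset.mem_sdiff] at haj
          exact Finset.mem_biUnion.mpr ⟨j, hJsub hj,
            Finset.mem_inter.mpr ⟨haj.1, haj.2.1⟩⟩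
      calc (X ∩ P).card + cval ℛ (P \ X)
          ≤ (X ∩ P).card + ((Jset ℛ (P \ X)).biUnion fun j => f j ∩ (P \ X)).card :=
            Nat.add_le_add_left h1 _
        _ = ((X ∩ P) ∪ ((Jset ℛ (P \ X)).biUnion fun j => f j ∩ (P \ X))).card :=
            (Finset.card_union_of_disjoint hdisj).symm
        _ ≤ ((Jset ℛ P).biUnion fun j => f j ∩ P).card := Finset.card_le_card hsub
        _ = cval ℛ P := hc.symm
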